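/- In the above setting with a = 0 and tr A = 0 (strongly unimodular case), the Hermitian structure is never Kähler, and it is SKT if and only if A is skew-symmetric with respect to g (i.e., A + Aᵗ = 0, so A ∈ u(k₁, J, g)) and η ∧ η = 0. -/
import Mathlib


open scoped RealInnerProductSpace

section Stmt4Aux

variable {k : Type*} [NormedAddCommGroup k] [InnerProductSpace ℝ k] [FiniteDimensional ℝ k]

/-- The bilinear expression controlling `dω`. -/
noncomputable def sktPhi (A : k →ₗ[ℝ] k) (η : k →ₗ[ℝ] k →ₗ[ℝ] ℝ) (Jk : k →ₗ[ℝ] k)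
    (X Y : k) : ℝ :=
  η X Y - ⟪Jk (A X + LinearMap.adjoint A X), Y⟫

variable (A : k →ₗ[ℝ] k) (η : k →ₗ[ℝ] k →ₗ[ℝ] ℝ) (Jk : k →ₗ[ℝ] k)

lemma skt_jskew (hJk2 : ∀ X, Jk (Jk X) = -X)
    (hJkorth : ∀ X Y : k, ⟪Jk X, Jk Y⟫ = ⟪X, Y⟫) :
    ∀ U V : k, ⟪Jk U, V⟫ = -⟪U, Jk V⟫ := by
  intro U V
  have h := hJkorth (Jk U) V
  rw [hJk2] at h
  rw [← h, inner_neg_left]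

lemma skt_key1 (hJk2 : ∀ X, Jk (Jk X) = -X)
    (hJkorth : ∀ X Y : k, ⟪Jk X, Jk Y⟫ = ⟪X, Y⟫)
    (hcomm : ∀ X : k, A (Jk X) = Jk (A X)) :
    ∀ X Y : k, ⟪Jk (LinearMap.adjoint A X), Y⟫ = -⟪Jk (A Y), X⟫ := by
  intro X Y
  calc ⟪Jk (LinearMap.adjoint A X), Y⟫
      = -⟪LinearMap.adjoint A X, Jk Y⟫ := skt_jskew Jk hJk2 hJkorth _ _
    _ = -⟪X, A (Jk Y)⟫ := by rw [LinearMap.adjoint_inner_left]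
    _ = -⟪X, Jk (A Y)⟫ := by rw [hcomm]
    _ = -⟪Jk (A Y), X⟫ := by rw [real_inner_comm]

lemma sktPhi_eq (hJk2 : ∀ X, Jk (Jk X) = -X)
    (hJkorth : ∀ X Y : k, ⟪Jk X, Jk Y⟫ = ⟪X, Y⟫)
    (hcomm : ∀ X : k, A (Jk X) = Jk (A X)) :
    ∀ X Y : k, sktPhi A η Jk X Y = η X Y - ⟪Jk (A X), Y⟫ + ⟪Jk (A Y), X⟫ := by
  intro X Y
  unfold sktPhi
  rw [map_add, inner_add_left, skt_key1 A Jk hJk2 hJkorth hcomm]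
  ring

lemma sktPhi_alt (hη_alt : ∀ X Y : k, η X Y = - η Y X)
    (hJk2 : ∀ X, Jk (Jk X) = -X)
    (hJkorth : ∀ X Y : k, ⟪Jk X, Jk Y⟫ = ⟪X, Y⟫)
    (hcomm : ∀ X : k, A (Jk X) = Jk (A X)) :
    ∀ X Y : k, sktPhi A η Jk X Y = - sktPhi A η Jk Y X := by
  intro X Y
  rw [sktPhi_eq A η Jk hJk2 hJkorth hcomm, sktPhi_eq A η Jk hJk2 hJkorth hcomm, hη_alt X Y]
  ring

lemma sktPhi_J (hJk2 : ∀ X, Jk (Jk X) = -X)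
    (hJkorth : ∀ X Y : k, ⟪Jk X, Jk Y⟫ = ⟪X, Y⟫)
    (hcomm : ∀ X : k, A (Jk X) = Jk (A X))
    (h11 : ∀ X Y : k, η (Jk X) (Jk Y) = η X Y) :
    ∀ X Y : k, sktPhi A η Jk (Jk X) (Jk Y) = sktPhi A η Jk X Y := by
  intro X Y
  rw [sktPhi_eq A η Jk hJk2 hJkorth hcomm, sktPhi_eq A η Jk hJk2 hJkorth hcomm]
  simp only [hcomm, hJkorth, h11]

lemma sktPhi_zero_left (Y : k) : sktPhi A η Jk 0 Y = 0 := by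
  unfold sktPhi; simp

lemma sktPhi_zero_right (X : k) : sktPhi A η Jk X 0 = 0 := by
  unfold sktPhi; simp

lemma sktPhi_sub_left (x y z : k) :
    sktPhi A η Jk (x - y) z = sktPhi A η Jk x z - sktPhi A η Jk y z := by
  unfold sktPhi
  simp only [map_sub, map_add, LinearMap.sub_apply, inner_sub_left, inner_add_left]
  ring

lemma sktPhi_smul_left (c : ℝ) (x z : k) :
    sktPhi A η Jk (c • x) z = c * sktPhi A η Jk x z := by
  unfold sktPhi
  simp only [map_smul, map_add, LinearMap.smul_apply, inner_add_left, real_inner_smul_left,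
    smul_eq_mul]
  ring

lemma sktPhi_sub_right (x y z : k) :
    sktPhi A η Jk x (y - z) = sktPhi A η Jk x y - sktPhi A η Jk x z := by
  unfold sktPhi
  simp only [map_sub, inner_sub_right]
  ring

lemma sktPhi_smul_right (c : ℝ) (x z : k) :
    sktPhi A η Jk x (c • z) = c * sktPhi A η Jk x z := by
  unfold sktPhi
  simp only [map_smul, real_inner_smul_right, smul_eq_mul]
  ring

lemma skt_adjcomm (hJk2 : ∀ X, Jk (Jk X) = -X)
    (hJkorth : ∀ X Y : k, ⟪Jk X, Jk Y⟫ = ⟪X, Y⟫)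
    (hcomm : ∀ X : k, A (Jk X) = Jk (A X)) :
    ∀ X : k, LinearMap.adjoint A (Jk X) = Jk (LinearMap.adjoint A X) := by
  intro X
  apply ext_inner_right ℝ
  intro v
  calc ⟪LinearMap.adjoint A (Jk X), v⟫
      = ⟪Jk X, A v⟫ := LinearMap.adjoint_inner_left A v (Jk X)
    _ = -⟪X, Jk (A v)⟫ := skt_jskew Jk hJk2 hJkorth _ _
    _ = -⟪X, A (Jk v)⟫ := by rw [hcomm]
    _ = -⟪LinearMap.adjoint A X, Jk v⟫ := by rw [LinearMap.adjoint_inner_left]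
    _ = ⟪Jk (LinearMap.adjoint A X), v⟫ := (skt_jskew Jk hJk2 hJkorth _ _).symm

/-- Trace of a composition with itself forces a self-adjoint map to vanish. -/
lemma skt_S_zero_of_trace (S : k →ₗ[ℝ] k)
    (hsym : LinearMap.adjoint S = S)
    (htr : LinearMap.trace ℝ k (S ∘ₗ S) = 0) : S = 0 := by
  let b := stdOrthonormalBasis ℝ k
  have htrace : ∀ f : k →ₗ[ℝ] k, LinearMap.trace ℝ k f = ∑ i, ⟪b i, f (b i)⟫ := by
    intro f
    rw [LinearMap.trace_eq_matrix_trace ℝ b.toBasis, Matrix.trace]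
    simp [Matrix.diag, LinearMap.toMatrix_apply, OrthonormalBasis.coe_toBasis_repr_apply,
      OrthonormalBasis.repr_apply_apply, OrthonormalBasis.coe_toBasis]
  have h1 : ∑ i, ⟪S (b i), S (b i)⟫ = 0 := by
    rw [← htr, htrace]
    refine Finset.sum_congr rfl fun i _ => ?_
    rw [LinearMap.comp_apply, ← LinearMap.adjoint_inner_left S, hsym]
    exact real_inner_comm _ _
  have h2 : ∀ i, S (b i) = 0 := by
    intro i
    have := (Finset.sum_eq_zero_iff_of_nonneg
      (fun i _ => real_inner_self_nonneg (x := S (b i)))).mp h1 i (Finset.mem_univ i)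
    exact inner_self_eq_zero.mp this
  apply b.toBasis.ext
  intro i
  simp [OrthonormalBasis.coe_toBasis, h2 i]

end Stmt4Aux

/-- Strongly unimodular case (`a = 0`, `tr A = 0`): the structure is never Kähler,
and it is SKT iff `A ∈ u(k₁,J,g)` (i.e. `Aᵗ = -A`) and `η ∧ η = 0`. -/
theorem stmt_4 {k : Type*} [NormedAddCommGroup k] [InnerProductSpace ℝ k]
    [FiniteDimensional ℝ k]
    (a : ℝ) (A : k →ₗ[ℝ] k) (η : k →ₗ[ℝ] k →ₗ[ℝ] ℝ) (Jk : k →ₗ[ℝ] k)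
    (ha : a = 0) (htrA : LinearMap.trace ℝ k A = 0)
    (hη_alt : ∀ X Y : k, η X Y = - η Y X) (hη_ne : η ≠ 0)
    (hJk2 : ∀ X, Jk (Jk X) = -X)
    (hJkorth : ∀ X Y : k, ⟪Jk X, Jk Y⟫ = ⟪X, Y⟫)
    (hcomm : ∀ X : k, A (Jk X) = Jk (A X))
    (h11 : ∀ X Y : k, η (Jk X) (Jk Y) = η X Y)
    (hder : ∀ X Y : k, η (A X) Y + η X (A Y) = a * η X Y)
    (br : (ℝ × k × ℝ) → (ℝ × k × ℝ) → (ℝ × k × ℝ))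
    (hbr : ∀ P Q : ℝ × k × ℝ, br P Q =
      (P.2.2 * (a * Q.1) - Q.2.2 * (a * P.1) - η P.2.1 Q.2.1,
       P.2.2 • A Q.2.1 - Q.2.2 • A P.2.1, 0))
    (J : (ℝ × k × ℝ) → (ℝ × k × ℝ))
    (hJ : ∀ P : ℝ × k × ℝ, J P = (-P.2.2, Jk P.2.1, P.1))
    (g ω : (ℝ × k × ℝ) → (ℝ × k × ℝ) → ℝ)
    (hg : ∀ P Q : ℝ × k × ℝ, g P Q = P.1 * Q.1 + ⟪P.2.1, Q.2.1⟫ + P.2.2 * Q.2.2)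
    (hω : ∀ P Q, ω P Q = g (J P) Q)
    (dω : (ℝ × k × ℝ) → (ℝ × k × ℝ) → (ℝ × k × ℝ) → ℝ)
    (hdω : ∀ P Q R, dω P Q R = -(ω (br P Q) R) - ω (br R P) Q - ω (br Q R) P)
    (σ : (ℝ × k × ℝ) → (ℝ × k × ℝ) → (ℝ × k × ℝ) → ℝ)
    (hσ : ∀ P Q R, σ P Q R = -(dω (J P) (J Q) (J R))) :
    (¬ (∀ P Q R, dω P Q R = 0)) ∧
    ((∀ P Q R S : ℝ × k × ℝ,
        -(σ (br P Q) R S) + σ (br P R) Q S - σ (br P S) Q R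
          - σ (br Q R) P S + σ (br Q S) P R - σ (br R S) P Q = 0) ↔
      (LinearMap.adjoint A = -A ∧
        ∀ X Y Z W : k,
          η X Y * η Z W - η X Z * η Y W + η X W * η Y Z
            + η Y Z * η X W - η Y W * η X Z + η Z W * η X Y = 0)) := by
  subst ha
  have hder0 : ∀ X Y : k, η (A X) Y + η X (A Y) = 0 := by
    intro X Y; have := hder X Y; linarith [this]
  have hPhiEq := sktPhi_eq A η Jk hJk2 hJkorth hcomm
  -- closed form for dω
  have L1 : ∀ P Q R : ℝ × k × ℝ, dω P Q R =
      P.2.2 * sktPhi A η Jk Q.2.1 R.2.1 + Q.2.2 * sktPhi A η Jk R.2.1 P.2.1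
        + R.2.2 * sktPhi A η Jk P.2.1 Q.2.1 := by
    intro P Q R
    rw [hdω, hω, hω, hω, hbr, hbr, hbr, hJ, hJ, hJ, hg, hg, hg]
    simp only [hPhiEq, map_sub, map_smul, inner_sub_left, real_inner_smul_left,
      inner_zero_left]
    ring
  -- closed form for σ
  have L2 : ∀ P Q R : ℝ × k × ℝ, σ P Q R =
      -(R.1 * sktPhi A η Jk P.2.1 Q.2.1 + P.1 * sktPhi A η Jk Q.2.1 R.2.1
        + Q.1 * sktPhi A η Jk R.2.1 P.2.1) := by
    intro P Q R
    rw [hσ, L1, hJ, hJ, hJ]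
    simp only
    rw [sktPhi_J A η Jk hJk2 hJkorth hcomm h11, sktPhi_J A η Jk hJk2 hJkorth hcomm h11,
      sktPhi_J A η Jk hJk2 hJkorth hcomm h11]
    ring
  -- closed form for the SKT expression
  have L3 : ∀ P Q R S : ℝ × k × ℝ,
      -(σ (br P Q) R S) + σ (br P R) Q S - σ (br P S) Q R
          - σ (br Q R) P S + σ (br Q S) P R - σ (br R S) P Q =
      - (η P.2.1 Q.2.1) * (sktPhi A η Jk R.2.1 S.2.1)
      + (η P.2.1 R.2.1) * (sktPhi A η Jk Q.2.1 S.2.1)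
      - (η P.2.1 S.2.1) * (sktPhi A η Jk Q.2.1 R.2.1)
      - (η Q.2.1 R.2.1) * (sktPhi A η Jk P.2.1 S.2.1)
      + (η Q.2.1 S.2.1) * (sktPhi A η Jk P.2.1 R.2.1)
      - (η R.2.1 S.2.1) * (sktPhi A η Jk P.2.1 Q.2.1)
      - (sktPhi A η Jk (A P.2.1) Q.2.1) * (R.1) * (S.2.2)
      + (sktPhi A η Jk (A P.2.1) Q.2.1) * (S.1) * (R.2.2)
      - (sktPhi A η Jk (A P.2.1) R.2.1) * (S.1) * (Q.2.2)
      + (sktPhi A η Jk (A Q.2.1) P.2.1) * (R.1) * (S.2.2)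
      - (sktPhi A η Jk (A Q.2.1) P.2.1) * (S.1) * (R.2.2)
      + (sktPhi A η Jk (A Q.2.1) R.2.1) * (S.1) * (P.2.2)
      - (sktPhi A η Jk (A R.2.1) P.2.1) * (Q.1) * (S.2.2)
      + (sktPhi A η Jk (A R.2.1) P.2.1) * (S.1) * (Q.2.2)
      - (sktPhi A η Jk (A R.2.1) Q.2.1) * (S.1) * (P.2.2)
      + (sktPhi A η Jk (A S.2.1) P.2.1) * (Q.1) * (R.2.2)
      - (sktPhi A η Jk (A S.2.1) P.2.1) * (R.1) * (Q.2.2)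
      + (sktPhi A η Jk (A S.2.1) Q.2.1) * (R.1) * (P.2.2)
      - (sktPhi A η Jk Q.2.1 (A R.2.1)) * (P.1) * (S.2.2)
      + (sktPhi A η Jk Q.2.1 (A S.2.1)) * (P.1) * (R.2.2)
      - (sktPhi A η Jk R.2.1 (A P.2.1)) * (Q.1) * (S.2.2)
      + (sktPhi A η Jk R.2.1 (A Q.2.1)) * (P.1) * (S.2.2)
      - (sktPhi A η Jk R.2.1 (A S.2.1)) * (P.1) * (Q.2.2)
      + (sktPhi A η Jk R.2.1 (A S.2.1)) * (Q.1) * (P.2.2)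
      + (sktPhi A η Jk S.2.1 (A P.2.1)) * (Q.1) * (R.2.2)
      - (sktPhi A η Jk S.2.1 (A P.2.1)) * (R.1) * (Q.2.2)
      - (sktPhi A η Jk S.2.1 (A Q.2.1)) * (P.1) * (R.2.2)
      + (sktPhi A η Jk S.2.1 (A Q.2.1)) * (R.1) * (P.2.2)
      + (sktPhi A η Jk S.2.1 (A R.2.1)) * (P.1) * (Q.2.2)
      - (sktPhi A η Jk S.2.1 (A R.2.1)) * (Q.1) * (P.2.2) := by
    intro P Q R S
    rw [L2, L2, L2, L2, L2, L2, hbr, hbr, hbr, hbr, hbr, hbr]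
    simp only [sktPhi_sub_left, sktPhi_smul_left, sktPhi_sub_right, sktPhi_smul_right]
    ring
  -- If the sktPhi form vanishes on A-derivation pairs, then A + adjoint A = 0.
  have SZero : (∀ Y Z : k, sktPhi A η Jk (A Y) Z + sktPhi A η Jk Y (A Z) = 0) →
      A + LinearMap.adjoint A = 0 := by
    intro hD
    have hvec : ∀ Y : k, (A (A Y) + LinearMap.adjoint A (A Y))
        + LinearMap.adjoint A (A Y + LinearMap.adjoint A Y) = 0 := by
      intro Y
      have hz : ∀ Z : k, ⟪Jk ((A (A Y) + LinearMap.adjoint A (A Y))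
          + LinearMap.adjoint A (A Y + LinearMap.adjoint A Y)), Z⟫ = 0 := by
        intro Z
        have h := hD Y Z
        unfold sktPhi at h
        have e1 : ⟪Jk (A Y + LinearMap.adjoint A Y), A Z⟫
            = ⟪Jk (LinearMap.adjoint A (A Y + LinearMap.adjoint A Y)), Z⟫ := by
          rw [← skt_adjcomm A Jk hJk2 hJkorth hcomm]
          exact (LinearMap.adjoint_inner_left A Z _).symm
        rw [map_add, inner_add_left]
        linear_combination -h + hder0 Y Z - e1
      have h4 : Jk ((A (A Y) + LinearMap.adjoint A (A Y))
          + LinearMap.adjoint A (A Y + LinearMap.adjoint A Y)) = 0 :=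
        inner_self_eq_zero.mp (hz _)
      have h5 := congrArg Jk h4
      rw [hJk2, map_zero] at h5
      exact neg_eq_zero.mp h5
    have hcomp : (A + LinearMap.adjoint A) ∘ₗ (A + LinearMap.adjoint A)
        = A ∘ₗ (A + LinearMap.adjoint A) - (A + LinearMap.adjoint A) ∘ₗ A := by
      apply LinearMap.ext; intro Y
      simp only [LinearMap.comp_apply, LinearMap.add_apply, LinearMap.sub_apply]
      have h7 : LinearMap.adjoint A (A Y + LinearMap.adjoint A Y)
          = -(A (A Y) + LinearMap.adjoint A (A Y)) :=
        eq_neg_of_add_eq_zero_right (hvec Y)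
      rw [h7]
      abel
    have htr2 : LinearMap.trace ℝ k
        ((A + LinearMap.adjoint A) ∘ₗ (A + LinearMap.adjoint A)) = 0 := by
      rw [hcomp, map_sub,
        show A ∘ₗ (A + LinearMap.adjoint A) = A * (A + LinearMap.adjoint A) from rfl,
        show (A + LinearMap.adjoint A) ∘ₗ A = (A + LinearMap.adjoint A) * A from rfl,
        LinearMap.trace_mul_comm]
      exact sub_self _
    have hsym : LinearMap.adjoint (A + LinearMap.adjoint A) = A + LinearMap.adjoint A := by
      rw [map_add, LinearMap.adjoint_adjoint]
      exact add_comm _ _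
    exact skt_S_zero_of_trace _ hsym htr2
  constructor
  · -- never Kähler
    intro hKa
    have hPhi0 : ∀ X Y : k, sktPhi A η Jk X Y = 0 := by
      intro X Y
      have h := hKa (0, X, 0) (0, Y, 0) (0, 0, 1)
      rw [L1] at h
      simpa using h
    have hS0 := SZero (fun Y Z => by rw [hPhi0, hPhi0, add_zero])
    have hη0 : ∀ X Y : k, η X Y = 0 := by
      intro X Y
      have h := hPhi0 X Y
      unfold sktPhi at h
      rw [← LinearMap.add_apply, hS0] at h
      simpa using h
    apply hη_ne
    ext X Y
    simpa using hη0 X Y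
  constructor
  · intro H
    have hD : ∀ Y Z : k, sktPhi A η Jk (A Y) Z + sktPhi A η Jk Y (A Z) = 0 := by
      intro Y Z
      have h := H (0, 0, 1) (0, Y, 0) (0, Z, 0) (1, 0, 0)
      rw [L3] at h
      simp [sktPhi_zero_left, sktPhi_zero_right] at h
      have halt := sktPhi_alt A η Jk hη_alt hJk2 hJkorth hcomm (A Z) Y
      linear_combination h + halt
    have hS0 := SZero hD
    refine ⟨eq_neg_of_add_eq_zero_right hS0, ?_⟩
    have hPhiη : ∀ X Y : k, sktPhi A η Jk X Y = η X Y := by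
      intro X Y
      unfold sktPhi
      rw [← LinearMap.add_apply, hS0]
      simp
    intro X Y Z W
    have h := H (0, X, 0) (0, Y, 0) (0, Z, 0) (0, W, 0)
    rw [L3] at h
    simp only [hPhiη] at h
    simp at h
    linear_combination -h
  · rintro ⟨hadj, hw⟩
    have hPhiη : ∀ X Y : k, sktPhi A η Jk X Y = η X Y := by
      intro X Y
      unfold sktPhi
      rw [hadj]
      simp
    intro P Q R S
    rw [L3]
    simp only [hPhiη]
    linear_combination (norm := ring)
      (-1 : ℝ) * hw P.2.1 Q.2.1 R.2.1 S.2.1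
      + ((1) : ℝ) * (R.1*S.2.2) * (hη_alt P.2.1 (A Q.2.1))
      + ((-1) : ℝ) * (S.1*R.2.2) * (hη_alt P.2.1 (A Q.2.1))
      + ((1) : ℝ) * (S.1*Q.2.2) * (hη_alt P.2.1 (A R.2.1))
      + ((-1) : ℝ) * (P.1*S.2.2) * (hη_alt Q.2.1 (A R.2.1))
      + ((-1) : ℝ) * (S.1*P.2.2) * (hη_alt Q.2.1 (A R.2.1))
      + ((1) : ℝ) * (P.1*R.2.2) * (hη_alt Q.2.1 (A S.2.1))
      + ((-1) : ℝ) * (P.1*Q.2.2) * (hη_alt R.2.1 (A S.2.1))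
      + ((1) : ℝ) * (Q.1*P.2.2) * (hη_alt R.2.1 (A S.2.1))
      + ((-1) : ℝ) * (R.1*S.2.2) * (hder0 P.2.1 Q.2.1)
      + ((1) : ℝ) * (S.1*R.2.2) * (hder0 P.2.1 Q.2.1)
      + ((-1) : ℝ) * (S.1*Q.2.2) * (hder0 P.2.1 R.2.1)
      + ((1) : ℝ) * (S.1*P.2.2) * (hder0 Q.2.1 R.2.1)
      + ((-1) : ℝ) * (Q.1*S.2.2) * (hder0 R.2.1 P.2.1)
      + ((1) : ℝ) * (P.1*S.2.2) * (hder0 R.2.1 Q.2.1)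
      + ((1) : ℝ) * (Q.1*R.2.2) * (hder0 S.2.1 P.2.1)
      + ((-1) : ℝ) * (R.1*Q.2.2) * (hder0 S.2.1 P.2.1)
      + ((-1) : ℝ) * (P.1*R.2.2) * (hder0 S.2.1 Q.2.1)
      + ((1) : ℝ) * (R.1*P.2.2) * (hder0 S.2.1 Q.2.1)
      + ((1) : ℝ) * (P.1*Q.2.2) * (hder0 S.2.1 R.2.1)
      + ((-1) : ℝ) * (Q.1*P.2.2) * (hder0 S.2.1 R.2.1)
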